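/- Let H be an inner product space over 𝕜 (𝕜 = ℝ or ℂ), u, v ∈ H, and c, C ∈ 𝕜 with Re(conj(c)·C) > 0. If Re⟨Cv − u, u − cv⟩ ≥ 0, then ‖u‖²‖v‖² − |⟨u,v⟩|² ≤ (1/4)·M(c,C)²·|⟨u,v⟩|², where M(c,C) := [((|C| − |c|)² + 4(|conj(c)·C| − Re(conj(c)·C)))/Re(conj(c)·C)]^{1/2}. -/

import Mathlib

/-- The constant `M(c, C)` from Theorem 2. -/
noncomputable def grussM {𝕜 : Type*} [RCLike 𝕜] (c C : 𝕜) : ℝ :=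
  Real.sqrt (((‖C‖ - ‖c‖) ^ 2 +
      4 * (‖starRingEnd 𝕜 c * C‖ - RCLike.re (starRingEnd 𝕜 c * C))) /
    RCLike.re (starRingEnd 𝕜 c * C))

/-- A reverse of the Schwarz inequality in squared form (inequality (2.9)). -/
theorem reverse_schwarz_sq {𝕜 H : Type*} [RCLike 𝕜] [NormedAddCommGroup H]
    [InnerProductSpace 𝕜 H] (u v : H) (c C : 𝕜)
    (hcC : 0 < RCLike.re (starRingEnd 𝕜 c * C))
    (h : 0 ≤ RCLike.re (inner 𝕜 (C • v - u) (u - c • v))) :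
    ‖u‖ ^ 2 * ‖v‖ ^ 2 - ‖(inner 𝕜 u v)‖ ^ 2 ≤
      (1 / 4 : ℝ) * grussM c C ^ 2 * ‖(inner 𝕜 u v)‖ ^ 2 := by
  set d : ℝ := RCLike.re (starRingEnd 𝕜 c * C) with hd
  set S : ℝ := ‖(inner 𝕜 u v)‖ with hS
  set N : ℝ := (‖C‖ - ‖c‖) ^ 2 + 4 * (‖starRingEnd 𝕜 c * C‖ - d) with hN
  -- expansion of the hypothesis
  have hexp : RCLike.re (inner 𝕜 (C • v - u) (u - c • v)) =
      RCLike.re ((C + c) * (inner 𝕜 u v)) - (‖u‖ ^ 2 + d * ‖v‖ ^ 2) := by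
    rw [hd]
    simp only [inner_sub_left, inner_sub_right, inner_smul_left, inner_smul_right,
      map_sub, map_add, RCLike.mul_re, RCLike.conj_re, RCLike.conj_im,
      inner_self_eq_norm_sq, ← inner_conj_symm v u]
    simp [RCLike.mul_re, RCLike.conj_re, RCLike.conj_im, RCLike.ofReal_re,
      RCLike.ofReal_im, inner_self_eq_norm_sq]
    ring
  have h1 : ‖u‖ ^ 2 + d * ‖v‖ ^ 2 ≤ RCLike.re ((C + c) * (inner 𝕜 u v)) := by
    rw [hexp] at h; linarith
  -- step 2: AM-GM
  have hsd : Real.sqrt d ^ 2 = d := Real.sq_sqrt hcC.le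
  have h2 : 2 * Real.sqrt d * (‖u‖ * ‖v‖) ≤ ‖u‖ ^ 2 + d * ‖v‖ ^ 2 := by
    nlinarith [sq_nonneg (‖u‖ - Real.sqrt d * ‖v‖)]
  -- step 3
  have h3 : RCLike.re ((C + c) * (inner 𝕜 u v)) ≤ ‖C + c‖ * S := by
    calc RCLike.re ((C + c) * (inner 𝕜 u v)) ≤ ‖(C + c) * (inner 𝕜 u v)‖ :=
          RCLike.re_le_norm _
      _ = ‖C + c‖ * S := by rw [norm_mul]
  have h4 : 2 * Real.sqrt d * (‖u‖ * ‖v‖) ≤ ‖C + c‖ * S := le_trans h2 (le_trans h1 h3)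
  have hsq : 4 * d * (‖u‖ ^ 2 * ‖v‖ ^ 2) ≤ ‖C + c‖ ^ 2 * S ^ 2 := by
    have h0 : 0 ≤ 2 * Real.sqrt d * (‖u‖ * ‖v‖) := by positivity
    nlinarith [mul_self_le_mul_self h0 h4, hsd, sq_nonneg (‖u‖*‖v‖)]
  -- step 4 : ‖C+c‖² ≤ N + 4d
  have hnormadd : ‖C + c‖ ^ 2 = ‖C‖ ^ 2 + ‖c‖ ^ 2 + 2 * d := by
    have h' := norm_add_sq (𝕜 := 𝕜) (x := C) (y := c)
    rw [RCLike.inner_apply] at h'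
    rw [hd, h']
    simp [RCLike.mul_re, RCLike.conj_re, RCLike.conj_im]
    ring
  have hnm : ‖starRingEnd 𝕜 c * C‖ = ‖c‖ * ‖C‖ := by
    rw [norm_mul, RCLike.norm_conj]
  have hdle : d ≤ ‖starRingEnd 𝕜 c * C‖ := by rw [hd]; exact RCLike.re_le_norm _
  have hNplus : ‖C + c‖ ^ 2 ≤ N + 4 * d := by
    rw [hnormadd, hN, hnm]; nlinarith [hdle, hnm]
  have key : 4 * d * (‖u‖ ^ 2 * ‖v‖ ^ 2) ≤ (N + 4 * d) * S ^ 2 := by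
    calc 4 * d * (‖u‖ ^ 2 * ‖v‖ ^ 2) ≤ ‖C + c‖ ^ 2 * S ^ 2 := hsq
      _ ≤ (N + 4 * d) * S ^ 2 := by
          apply mul_le_mul_of_nonneg_right hNplus (sq_nonneg S)
  have hNnn : 0 ≤ N := by
    rw [hN]; nlinarith [sq_nonneg (‖C‖ - ‖c‖), hdle]
  have hM : grussM c C ^ 2 = N / d := by
    rw [grussM, ← hd, ← hN]
    exact Real.sq_sqrt (div_nonneg hNnn hcC.le)
  rw [hM]
  have heq : (1 / 4 : ℝ) * (N / d) * S ^ 2 = N * S ^ 2 / (4 * d) := by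
    field_simp
  rw [heq, le_div_iff₀ (by positivity)]
  nlinarith [key]
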